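/- Let p(x) = Σ_{n∈I₁} αₙ N(x; μₙ, Pₙ) and q(x) = Σ_{m∈I₂} βₘ N(x; mₘ, Sₘ) be two finite Gaussian mixtures on ℝ^d with symmetric positive-definite covariances. Fix an index n ∈ I₁ and regard J(αₙ) = ISD(p‖q) as a function of the single weight αₙ, all other weights α_{n'} (n' ≠ n) and βₘ held fixed. Then J is differentiable at every αₙ ∈ ℝ with derivative J'(αₙ) = 2 Σ_{n'∈I₁, n'≠n} α_{n'} N(μₙ; μ_{n'}, Pₙ + P_{n'}) + 2 αₙ N(μₙ; μₙ, 2Pₙ) − 2 Σ_{m∈I₂} βₘ N(μₙ; mₘ, Pₙ + Sₘ). -/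

import Mathlib

open MeasureTheory Real Matrix Finset

/-- The multivariate Gaussian density
`N(x; μ, Σ) = ((2π)^d det Σ)^{-1/2} exp(-(1/2)(x-μ)ᵀ Σ⁻¹ (x-μ))` on `ℝ^d`. -/
noncomputable def gaussPDF (d : ℕ) (μ : Fin d → ℝ) (S : Matrix (Fin d) (Fin d) ℝ)
    (x : Fin d → ℝ) : ℝ :=
  (Real.sqrt ((2 * Real.pi) ^ d * S.det))⁻¹ *
    Real.exp (-(1 / 2) * ((x - μ) ⬝ᵥ (S⁻¹ *ᵥ (x - μ))))


section Aux
variable {d : ℕ}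

variable {d : ℕ}

/-- symmetric bilinear swap -/
lemma dot_swap {N : Matrix (Fin d) (Fin d) ℝ} (hN : Nᵀ = N) (u v : Fin d → ℝ) :
    u ⬝ᵥ N *ᵥ v = v ⬝ᵥ N *ᵥ u := by
  rw [Matrix.dotProduct_mulVec, ← Matrix.mulVec_transpose, hN, dotProduct_comm]

lemma posdef_transpose {N : Matrix (Fin d) (Fin d) ℝ} (hN : N.PosDef) : Nᵀ = N := by
  have := hN.1
  rwa [Matrix.IsHermitian, Matrix.conjTranspose_eq_transpose_of_trivial] at this

/-- change of variables for an invertible matrix -/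
lemma integral_comp_mulVec {B : Matrix (Fin d) (Fin d) ℝ} (hB : B.det ≠ 0)
    (f : (Fin d → ℝ) → ℝ) :
    ∫ x : Fin d → ℝ, f (B *ᵥ x) = |B.det|⁻¹ * ∫ y : Fin d → ℝ, f y := by
  have hinv : Invertible B := B.invertibleOfIsUnitDet (isUnit_iff_ne_zero.mpr hB)
  let e : (Fin d → ℝ) ≃ₗ[ℝ] (Fin d → ℝ) := B.toLinearEquiv' hinv
  have he : ∀ x, e x = B *ᵥ x := fun x => rfl
  have hdet : LinearMap.det (e : (Fin d → ℝ) →ₗ[ℝ] (Fin d → ℝ)) = B.det := by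
    have : (e : (Fin d → ℝ) →ₗ[ℝ] (Fin d → ℝ)) = Matrix.toLin' B := B.toLinearEquiv'_apply hinv
    rw [this, LinearMap.det_toLin']
  have hemb : MeasurableEmbedding (⇑e) :=
    (e.toContinuousLinearEquiv.toHomeomorph).measurableEmbedding
  have hmap : Measure.map (⇑e) volume = ENNReal.ofReal |B.det⁻¹| • volume := by
    have := Measure.map_linearMap_addHaar_eq_smul_addHaar (volume : Measure (Fin d → ℝ))
      (f := (e : (Fin d → ℝ) →ₗ[ℝ] (Fin d → ℝ))) (by rw [hdet]; exact hB)
    rw [hdet] at this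
    exact this
  calc ∫ x : Fin d → ℝ, f (B *ᵥ x) = ∫ x, f (e x) := by simp_rw [he]
    _ = ∫ y, f y ∂(Measure.map (⇑e) volume) := (hemb.integral_map f).symm
    _ = |B.det|⁻¹ * ∫ y, f y := by
        rw [hmap, integral_smul_measure, ENNReal.toReal_ofReal (abs_nonneg _), abs_inv,
          smul_eq_mul]

lemma integrable_comp_mulVec {B : Matrix (Fin d) (Fin d) ℝ} (hB : B.det ≠ 0)
    {f : (Fin d → ℝ) → ℝ} (hf : Integrable f) :
    Integrable (fun x : Fin d → ℝ => f (B *ᵥ x)) := by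
  have hinv : Invertible B := B.invertibleOfIsUnitDet (isUnit_iff_ne_zero.mpr hB)
  let e : (Fin d → ℝ) ≃ₗ[ℝ] (Fin d → ℝ) := B.toLinearEquiv' hinv
  have he : ∀ x, e x = B *ᵥ x := fun x => rfl
  have hdet : LinearMap.det (e : (Fin d → ℝ) →ₗ[ℝ] (Fin d → ℝ)) = B.det := by
    have : (e : (Fin d → ℝ) →ₗ[ℝ] (Fin d → ℝ)) = Matrix.toLin' B := B.toLinearEquiv'_apply hinv
    rw [this, LinearMap.det_toLin']
  have hemb : MeasurableEmbedding (⇑e) :=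
    (e.toContinuousLinearEquiv.toHomeomorph).measurableEmbedding
  have hmap : Measure.map (⇑e) volume = ENNReal.ofReal |B.det⁻¹| • volume := by
    have := Measure.map_linearMap_addHaar_eq_smul_addHaar (volume : Measure (Fin d → ℝ))
      (f := (e : (Fin d → ℝ) →ₗ[ℝ] (Fin d → ℝ))) (by rw [hdet]; exact hB)
    rw [hdet] at this
    exact this
  have : Integrable f (Measure.map (⇑e) volume) := by
    rw [hmap]
    exact hf.smul_measure ENNReal.ofReal_ne_top
  have h2 := (hemb.integrable_map_iff).mp this
  simpa [Function.comp_def, he] using h2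
open scoped RealInnerProductSpace

variable {d : ℕ}

lemma norm_sq_euclidean (v : EuclideanSpace ℝ (Fin d)) :
    ‖v‖ ^ 2 = (fun i => v i) ⬝ᵥ (fun i => v i) := by
  rw [EuclideanSpace.norm_eq, sq_sqrt (by positivity)]
  simp [dotProduct, sq]

lemma integral_std_gauss :
    ∫ y : Fin d → ℝ, Real.exp (-(1 / 2) * (y ⬝ᵥ y)) = Real.sqrt ((2 * π) ^ d) := by
  have hmp := EuclideanSpace.volume_preserving_symm_measurableEquiv_toLp (Fin d)
  have hemb : MeasurableEmbedding (⇑(MeasurableEquiv.toLp 2 (Fin d → ℝ)).symm) :=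
    (MeasurableEquiv.toLp 2 (Fin d → ℝ)).symm.measurableEmbedding
  have h1 : ∫ y : Fin d → ℝ, Real.exp (-(1 / 2) * (y ⬝ᵥ y))
      = ∫ v : EuclideanSpace ℝ (Fin d), Real.exp (-(1 / 2) * ‖v‖ ^ 2) := by
    rw [← hmp.integral_comp hemb]
    congr 1 with v
    rw [norm_sq_euclidean]
    rfl
  rw [h1]
  have h2 := GaussianFourier.integral_rexp_neg_mul_sq_norm
    (V := EuclideanSpace ℝ (Fin d)) (b := 1/2) (by norm_num)
  simp_rw [neg_mul] at h2 ⊢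
  rw [h2, finrank_euclideanSpace_fin]
  rw [show π / (1/2 : ℝ) = 2 * π by ring]
  rw [show ((d : ℝ) / 2) = (d : ℝ) * (1/2) by ring, Real.rpow_mul (by positivity),
    Real.rpow_natCast, ← Real.sqrt_eq_rpow]

lemma integrable_std_gauss :
    Integrable (fun y : Fin d → ℝ => Real.exp (-(1 / 2) * (y ⬝ᵥ y))) := by
  have hmp := EuclideanSpace.volume_preserving_symm_measurableEquiv_toLp (Fin d)
  have hemb : MeasurableEmbedding (⇑(MeasurableEquiv.toLp 2 (Fin d → ℝ)).symm) :=
    (MeasurableEquiv.toLp 2 (Fin d → ℝ)).symm.measurableEmbedding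
  have hE : Integrable (fun v : EuclideanSpace ℝ (Fin d) => Real.exp (-(1 / 2) * ‖v‖ ^ 2)) := by
    have hc := (GaussianFourier.integrable_cexp_neg_mul_sq_norm_add
      (V := EuclideanSpace ℝ (Fin d)) (b := (1/2 : ℂ)) (by norm_num) 0 0).re
    have heq : (fun v : EuclideanSpace ℝ (Fin d) =>
        RCLike.re (Complex.exp (-(1/2 : ℂ) * (‖v‖ : ℂ) ^ 2 + 0 * (⟪(0 : EuclideanSpace ℝ (Fin d)), v⟫ : ℝ))))
        = fun v : EuclideanSpace ℝ (Fin d) => Real.exp (-(1 / 2) * ‖v‖ ^ 2) := by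
      funext v
      rw [show (-(1/2 : ℂ) * (‖v‖ : ℂ) ^ 2 + 0 * ((⟪(0 : EuclideanSpace ℝ (Fin d)), v⟫ : ℝ) : ℂ))
          = ((-(1/2) * ‖v‖ ^ 2 : ℝ) : ℂ) by push_cast; ring]
      exact Complex.exp_ofReal_re _
    rwa [heq] at hc
  refine (hmp.integrable_comp_emb hemb).mp ?_
  have : (fun y : Fin d → ℝ => Real.exp (-(1 / 2) * (y ⬝ᵥ y))) ∘
      (⇑(MeasurableEquiv.toLp 2 (Fin d → ℝ)).symm)
      = fun v : EuclideanSpace ℝ (Fin d) => Real.exp (-(1 / 2) * ‖v‖ ^ 2) := by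
    funext v
    simp only [Function.comp_apply]
    rw [norm_sq_euclidean]
    rfl
  rw [this]
  exact hE
section quad
open scoped MatrixOrder
variable {A : Matrix (Fin d) (Fin d) ℝ} (hA : A.PosDef)

include hA

lemma sqrt_facts :
    ∃ B : Matrix (Fin d) (Fin d) ℝ, Bᵀ = B ∧ B * B = A ∧ |B.det| = Real.sqrt A.det := by
  refine ⟨CFC.sqrt A, ?_, CFC.sqrt_mul_sqrt_self A hA.posSemidef.nonneg, ?_⟩
  · have := (CFC.sqrt_nonneg A).posSemidef.1
    rwa [Matrix.IsHermitian, Matrix.conjTranspose_eq_transpose_of_trivial] at this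
  · have h2 : (CFC.sqrt A).det ^ 2 = A.det := by
      rw [sq, ← Matrix.det_mul, CFC.sqrt_mul_sqrt_self A hA.posSemidef.nonneg]
    rw [← h2, Real.sqrt_sq_eq_abs]

lemma quad_eq_norm {B : Matrix (Fin d) (Fin d) ℝ} (hBt : Bᵀ = B) (hBB : B * B = A)
    (x : Fin d → ℝ) : x ⬝ᵥ A *ᵥ x = (B *ᵥ x) ⬝ᵥ (B *ᵥ x) := by
  rw [← hBB, ← Matrix.mulVec_mulVec, Matrix.dotProduct_mulVec x B,
    ← Matrix.mulVec_transpose, hBt]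

lemma det_sqrt_ne_zero {B : Matrix (Fin d) (Fin d) ℝ} (hBB : B * B = A) : B.det ≠ 0 := by
  intro h
  have : A.det = 0 := by rw [← hBB, Matrix.det_mul, h, zero_mul]
  exact absurd this (ne_of_gt hA.det_pos)

end quad

lemma integral_exp_quad {A : Matrix (Fin d) (Fin d) ℝ} (hA : A.PosDef) :
    ∫ x : Fin d → ℝ, Real.exp (-(1 / 2) * (x ⬝ᵥ A *ᵥ x))
      = Real.sqrt ((2 * π) ^ d / A.det) := by
  obtain ⟨B, hBt, hBB, hBdet⟩ := sqrt_facts hA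
  have hBne : B.det ≠ 0 := det_sqrt_ne_zero hA hBB
  have h2 : ∫ x : Fin d → ℝ, Real.exp (-(1 / 2) * (x ⬝ᵥ A *ᵥ x))
      = ∫ x : Fin d → ℝ, Real.exp (-(1 / 2) * ((B *ᵥ x) ⬝ᵥ (B *ᵥ x))) := by
    congr 1 with x
    rw [quad_eq_norm hA hBt hBB]
  have h3 := integral_comp_mulVec hBne (fun y => Real.exp (-(1 / 2) * (y ⬝ᵥ y)))
  rw [h2, h3, integral_std_gauss, hBdet, div_eq_mul_inv,
    Real.sqrt_mul (by positivity), Real.sqrt_inv]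
  ring

lemma integrable_exp_quad {A : Matrix (Fin d) (Fin d) ℝ} (hA : A.PosDef) :
    Integrable (fun x : Fin d → ℝ => Real.exp (-(1 / 2) * (x ⬝ᵥ A *ᵥ x))) := by
  obtain ⟨B, hBt, hBB, hBdet⟩ := sqrt_facts hA
  have hBne : B.det ≠ 0 := det_sqrt_ne_zero hA hBB
  have h3 := integrable_comp_mulVec hBne (f := fun y => Real.exp (-(1 / 2) * (y ⬝ᵥ y)))
    integrable_std_gauss
  have h2 : (fun x : Fin d → ℝ => Real.exp (-(1 / 2) * (x ⬝ᵥ A *ᵥ x)))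
      = fun x : Fin d → ℝ => Real.exp (-(1 / 2) * ((B *ᵥ x) ⬝ᵥ (B *ᵥ x))) := by
    funext x
    rw [quad_eq_norm hA hBt hBB]
  rw [h2]
  exact h3

lemma integral_exp_quad_shift {A : Matrix (Fin d) (Fin d) ℝ} (hA : A.PosDef) (c : Fin d → ℝ) :
    ∫ x : Fin d → ℝ, Real.exp (-(1 / 2) * ((x - c) ⬝ᵥ A *ᵥ (x - c)))
      = Real.sqrt ((2 * π) ^ d / A.det) := by
  rw [integral_sub_right_eq_self (fun x : Fin d → ℝ => Real.exp (-(1 / 2) * (x ⬝ᵥ A *ᵥ x))) c]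
  exact integral_exp_quad hA

lemma integrable_exp_quad_shift {A : Matrix (Fin d) (Fin d) ℝ} (hA : A.PosDef) (c : Fin d → ℝ) :
    Integrable (fun x : Fin d → ℝ => Real.exp (-(1 / 2) * ((x - c) ⬝ᵥ A *ᵥ (x - c)))) :=
  (integrable_exp_quad hA).comp_sub_right c


lemma integrable_gaussPDF {S : Matrix (Fin d) (Fin d) ℝ} (hS : S.PosDef) (μ : Fin d → ℝ) :
    Integrable (gaussPDF d μ S) := by
  unfold gaussPDF
  exact (integrable_exp_quad_shift hS.inv μ).const_mul _

lemma integral_gaussPDF {S : Matrix (Fin d) (Fin d) ℝ} (hS : S.PosDef) (μ : Fin d → ℝ) :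
    ∫ x : Fin d → ℝ, gaussPDF d μ S x = 1 := by
  unfold gaussPDF
  rw [MeasureTheory.integral_const_mul, integral_exp_quad_shift hS.inv μ]
  rw [Matrix.det_nonsing_inv, Ring.inverse_eq_inv, div_inv_eq_mul]
  rw [inv_mul_cancel₀]
  have h0 : 0 < (2 * π) ^ d * S.det := by
    have := hS.det_pos
    positivity
  exact ne_of_gt (Real.sqrt_pos.mpr h0)

lemma mulVec_dot (N : Matrix (Fin d) (Fin d) ℝ) (u v : Fin d → ℝ) :
    (N *ᵥ u) ⬝ᵥ v = u ⬝ᵥ (Nᵀ *ᵥ v) := by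
  rw [dotProduct_comm, Matrix.dotProduct_mulVec, ← Matrix.mulVec_transpose,
    dotProduct_comm]

section prodid

variable {P₁ P₂ : Matrix (Fin d) (Fin d) ℝ} (h₁ : P₁.PosDef) (h₂ : P₂.PosDef)
  (μ₁ μ₂ : Fin d → ℝ)

include h₁ h₂

lemma fact1 : P₁ * (P₁⁻¹ + P₂⁻¹) * P₂ = P₁ + P₂ := by
  rw [mul_add, Matrix.mul_nonsing_inv _ (isUnit_iff_ne_zero.mpr (ne_of_gt h₁.det_pos)),
    add_mul, one_mul, mul_assoc, Matrix.nonsing_inv_mul _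
      (isUnit_iff_ne_zero.mpr (ne_of_gt h₂.det_pos)), mul_one, add_comm]

lemma fact2 : P₂ * (P₁⁻¹ + P₂⁻¹) * P₁ = P₁ + P₂ := by
  rw [mul_add, Matrix.mul_nonsing_inv _ (isUnit_iff_ne_zero.mpr (ne_of_gt h₂.det_pos)),
    add_mul, one_mul, mul_assoc, Matrix.nonsing_inv_mul _
      (isUnit_iff_ne_zero.mpr (ne_of_gt h₁.det_pos)), mul_one, add_comm]

lemma key1 : (P₁ + P₂)⁻¹ = P₂⁻¹ * (P₁⁻¹ + P₂⁻¹)⁻¹ * P₁⁻¹ := by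
  rw [← fact1 h₁ h₂, Matrix.mul_inv_rev, Matrix.mul_inv_rev, mul_assoc]

lemma key2 : (P₁ + P₂)⁻¹ = P₁⁻¹ * (P₁⁻¹ + P₂⁻¹)⁻¹ * P₂⁻¹ := by
  rw [← fact2 h₁ h₂, Matrix.mul_inv_rev, Matrix.mul_inv_rev, mul_assoc]

end prodid

section expid

variable {P₁ P₂ : Matrix (Fin d) (Fin d) ℝ} (h₁ : P₁.PosDef) (h₂ : P₂.PosDef)
  (μ₁ μ₂ x : Fin d → ℝ)

include h₁ h₂

lemma exp_quad_identity :
    (x - μ₁) ⬝ᵥ P₁⁻¹ *ᵥ (x - μ₁) + (x - μ₂) ⬝ᵥ P₂⁻¹ *ᵥ (x - μ₂)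
      = (μ₁ - μ₂) ⬝ᵥ (P₁ + P₂)⁻¹ *ᵥ (μ₁ - μ₂)
        + (x - (P₁⁻¹ + P₂⁻¹)⁻¹ *ᵥ (P₁⁻¹ *ᵥ μ₁ + P₂⁻¹ *ᵥ μ₂)) ⬝ᵥ
            (P₁⁻¹ + P₂⁻¹) *ᵥ (x - (P₁⁻¹ + P₂⁻¹)⁻¹ *ᵥ (P₁⁻¹ *ᵥ μ₁ + P₂⁻¹ *ᵥ μ₂)) := by
  set A := P₁⁻¹ with hAdef
  set B := P₂⁻¹ with hBdef
  set M := A + B with hMdef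
  set C := M⁻¹ with hCdef
  set c := C *ᵥ (A *ᵥ μ₁ + B *ᵥ μ₂) with hcdef
  have hApd : A.PosDef := h₁.inv
  have hBpd : B.PosDef := h₂.inv
  have hMpd : M.PosDef := hApd.add hBpd
  have hCpd : C.PosDef := hMpd.inv
  have hMu : IsUnit M.det := isUnit_iff_ne_zero.mpr (ne_of_gt hMpd.det_pos)
  have hAt : Aᵀ = A := posdef_transpose hApd
  have hBt : Bᵀ = B := posdef_transpose hBpd
  have hMt : Mᵀ = M := posdef_transpose hMpd
  have hCt : Cᵀ = C := posdef_transpose hCpd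
  -- key matrix identities
  have hMC : M * C = 1 := Matrix.mul_nonsing_inv _ hMu
  have hCM : C * M = 1 := Matrix.nonsing_inv_mul _ hMu
  have hkey2 : (P₁ + P₂)⁻¹ = A * C * B := key2 h₁ h₂
  have hkey1 : (P₁ + P₂)⁻¹ = B * C * A := key1 h₁ h₂
  have hswapmat : B * C * A = A * C * B := by rw [← hkey1, ← hkey2]
  have eM1 : A * C * A + A * C * B = A := by
    rw [← mul_add (A * C), ← hMdef, mul_assoc, hCM, mul_one]
  have eM2 : B * C * B + A * C * B = B := by
    rw [← add_mul, ← add_mul, add_comm B A, ← hMdef, hMC, one_mul]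
  -- M *ᵥ c
  have hMc : M *ᵥ c = A *ᵥ μ₁ + B *ᵥ μ₂ := by
    rw [hcdef, Matrix.mulVec_mulVec, hMC, Matrix.one_mulVec]
  -- c dotted with anything
  have hc_dot : ∀ z : Fin d → ℝ, c ⬝ᵥ z = μ₁ ⬝ᵥ (A * C) *ᵥ z + μ₂ ⬝ᵥ (B * C) *ᵥ z := by
    intro z
    rw [hcdef, mulVec_dot, hCt, add_dotProduct, mulVec_dot, mulVec_dot, hAt, hBt,
      Matrix.mulVec_mulVec, Matrix.mulVec_mulVec]
  -- the constant-term claim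
  have hcA : c ⬝ᵥ (A *ᵥ μ₁) = μ₁ ⬝ᵥ (A * C * A) *ᵥ μ₁ + μ₂ ⬝ᵥ (B * C * A) *ᵥ μ₁ := by
    rw [hc_dot (A *ᵥ μ₁), Matrix.mulVec_mulVec, Matrix.mulVec_mulVec]
  have hcB : c ⬝ᵥ (B *ᵥ μ₂) = μ₁ ⬝ᵥ (A * C * B) *ᵥ μ₂ + μ₂ ⬝ᵥ (B * C * B) *ᵥ μ₂ := by
    rw [hc_dot (B *ᵥ μ₂), Matrix.mulVec_mulVec, Matrix.mulVec_mulVec]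
  have hD : (μ₁ - μ₂) ⬝ᵥ (P₁ + P₂)⁻¹ *ᵥ (μ₁ - μ₂)
      = μ₁ ⬝ᵥ (A * C * B) *ᵥ μ₁ - μ₁ ⬝ᵥ (A * C * B) *ᵥ μ₂
        - μ₂ ⬝ᵥ (A * C * B) *ᵥ μ₁ + μ₂ ⬝ᵥ (A * C * B) *ᵥ μ₂ := by
    rw [hkey2, Matrix.mulVec_sub, dotProduct_sub, sub_dotProduct,
      sub_dotProduct]
    ring
  have e1 : μ₁ ⬝ᵥ (A * C * A) *ᵥ μ₁ + μ₁ ⬝ᵥ (A * C * B) *ᵥ μ₁ = μ₁ ⬝ᵥ A *ᵥ μ₁ := by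
    rw [← dotProduct_add, ← Matrix.add_mulVec, eM1]
  have e2 : μ₂ ⬝ᵥ (B * C * A) *ᵥ μ₁ = μ₂ ⬝ᵥ (A * C * B) *ᵥ μ₁ := by rw [hswapmat]
  have e3 : μ₂ ⬝ᵥ (B * C * B) *ᵥ μ₂ + μ₂ ⬝ᵥ (A * C * B) *ᵥ μ₂ = μ₂ ⬝ᵥ B *ᵥ μ₂ := by
    rw [← dotProduct_add, ← Matrix.add_mulVec, eM2]
  have claim : c ⬝ᵥ (A *ᵥ μ₁) + c ⬝ᵥ (B *ᵥ μ₂)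
      + (μ₁ - μ₂) ⬝ᵥ (P₁ + P₂)⁻¹ *ᵥ (μ₁ - μ₂)
      = μ₁ ⬝ᵥ A *ᵥ μ₁ + μ₂ ⬝ᵥ B *ᵥ μ₂ := by
    rw [hcA, hcB, hD]
    linarith [e1, e2, e3]
  -- expansions
  have eL1 : (x - μ₁) ⬝ᵥ A *ᵥ (x - μ₁)
      = x ⬝ᵥ A *ᵥ x - x ⬝ᵥ A *ᵥ μ₁ - μ₁ ⬝ᵥ A *ᵥ x + μ₁ ⬝ᵥ A *ᵥ μ₁ := by
    rw [Matrix.mulVec_sub, dotProduct_sub, sub_dotProduct,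
      sub_dotProduct]
    ring
  have eL2 : (x - μ₂) ⬝ᵥ B *ᵥ (x - μ₂)
      = x ⬝ᵥ B *ᵥ x - x ⬝ᵥ B *ᵥ μ₂ - μ₂ ⬝ᵥ B *ᵥ x + μ₂ ⬝ᵥ B *ᵥ μ₂ := by
    rw [Matrix.mulVec_sub, dotProduct_sub, sub_dotProduct,
      sub_dotProduct]
    ring
  have eR : (x - c) ⬝ᵥ M *ᵥ (x - c)
      = x ⬝ᵥ M *ᵥ x - x ⬝ᵥ M *ᵥ c - c ⬝ᵥ M *ᵥ x + c ⬝ᵥ M *ᵥ c := by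
    rw [Matrix.mulVec_sub, dotProduct_sub, sub_dotProduct,
      sub_dotProduct]
    ring
  have hswapA : μ₁ ⬝ᵥ A *ᵥ x = x ⬝ᵥ A *ᵥ μ₁ := dot_swap hAt μ₁ x
  have hswapB : μ₂ ⬝ᵥ B *ᵥ x = x ⬝ᵥ B *ᵥ μ₂ := dot_swap hBt μ₂ x
  have hswapM : c ⬝ᵥ M *ᵥ x = x ⬝ᵥ M *ᵥ c := dot_swap hMt c x
  have hMcx : x ⬝ᵥ M *ᵥ c = x ⬝ᵥ (A *ᵥ μ₁) + x ⬝ᵥ (B *ᵥ μ₂) := by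
    rw [hMc, dotProduct_add]
  have hMcc : c ⬝ᵥ M *ᵥ c = c ⬝ᵥ (A *ᵥ μ₁) + c ⬝ᵥ (B *ᵥ μ₂) := by
    rw [hMc, dotProduct_add]
  have hMxx : x ⬝ᵥ M *ᵥ x = x ⬝ᵥ A *ᵥ x + x ⬝ᵥ B *ᵥ x := by
    rw [hMdef, Matrix.add_mulVec, dotProduct_add]
  have hxA : x ⬝ᵥ (A *ᵥ μ₁) = x ⬝ᵥ A *ᵥ μ₁ := rfl
  have hxB : x ⬝ᵥ (B *ᵥ μ₂) = x ⬝ᵥ B *ᵥ μ₂ := rfl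
  rw [eL1, eL2, eR, hswapA, hswapB, hswapM, hMcx, hMcc, hMxx]
  linarith [claim]

end expid

section gpm
variable {P₁ P₂ : Matrix (Fin d) (Fin d) ℝ} (h₁ : P₁.PosDef) (h₂ : P₂.PosDef)
  (μ₁ μ₂ x : Fin d → ℝ)
include h₁ h₂

lemma gaussPDF_mul :
    gaussPDF d μ₁ P₁ x * gaussPDF d μ₂ P₂ x
      = gaussPDF d μ₂ (P₁ + P₂) μ₁ *
        gaussPDF d ((P₁⁻¹ + P₂⁻¹)⁻¹ *ᵥ (P₁⁻¹ *ᵥ μ₁ + P₂⁻¹ *ᵥ μ₂)) (P₁⁻¹ + P₂⁻¹)⁻¹ x := by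
  have hMpd : (P₁⁻¹ + P₂⁻¹).PosDef := h₁.inv.add h₂.inv
  have hMu : IsUnit (P₁⁻¹ + P₂⁻¹).det := isUnit_iff_ne_zero.mpr (ne_of_gt hMpd.det_pos)
  have hMne : (P₁⁻¹ + P₂⁻¹).det ≠ 0 := ne_of_gt hMpd.det_pos
  have hCinv : ((P₁⁻¹ + P₂⁻¹)⁻¹)⁻¹ = P₁⁻¹ + P₂⁻¹ := Matrix.nonsing_inv_nonsing_inv _ hMu
  have hdetsum : (P₁ + P₂).det = P₁.det * (P₁⁻¹ + P₂⁻¹).det * P₂.det := by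
    rw [← fact1 h₁ h₂, Matrix.det_mul, Matrix.det_mul]
  have hdetC : ((P₁⁻¹ + P₂⁻¹)⁻¹).det = ((P₁⁻¹ + P₂⁻¹).det)⁻¹ := by
    rw [Matrix.det_nonsing_inv, Ring.inverse_eq_inv]
  unfold gaussPDF
  rw [hCinv]
  have hconst : (Real.sqrt ((2 * π) ^ d * P₁.det))⁻¹ * (Real.sqrt ((2 * π) ^ d * P₂.det))⁻¹
      = (Real.sqrt ((2 * π) ^ d * (P₁ + P₂).det))⁻¹ *
        (Real.sqrt ((2 * π) ^ d * ((P₁⁻¹ + P₂⁻¹)⁻¹).det))⁻¹ := by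
    rw [← mul_inv, ← mul_inv,
      ← Real.sqrt_mul (mul_nonneg (by positivity) h₁.det_pos.le),
      ← Real.sqrt_mul (mul_nonneg (by positivity) (h₁.add h₂).det_pos.le)]
    congr 2
    rw [hdetsum, hdetC]
    have hmm : (P₁⁻¹ + P₂⁻¹).det * ((P₁⁻¹ + P₂⁻¹).det)⁻¹ = 1 := mul_inv_cancel₀ hMne
    linear_combination (-((2 * π) ^ d * (2 * π) ^ d * P₁.det * P₂.det)) * hmm
  have hexp : Real.exp (-(1 / 2) * ((x - μ₁) ⬝ᵥ P₁⁻¹ *ᵥ (x - μ₁))) *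
        Real.exp (-(1 / 2) * ((x - μ₂) ⬝ᵥ P₂⁻¹ *ᵥ (x - μ₂)))
      = Real.exp (-(1 / 2) * ((μ₁ - μ₂) ⬝ᵥ (P₁ + P₂)⁻¹ *ᵥ (μ₁ - μ₂))) *
        Real.exp (-(1 / 2) * ((x - (P₁⁻¹ + P₂⁻¹)⁻¹ *ᵥ (P₁⁻¹ *ᵥ μ₁ + P₂⁻¹ *ᵥ μ₂)) ⬝ᵥ
          (P₁⁻¹ + P₂⁻¹) *ᵥ (x - (P₁⁻¹ + P₂⁻¹)⁻¹ *ᵥ (P₁⁻¹ *ᵥ μ₁ + P₂⁻¹ *ᵥ μ₂)))) := by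
    rw [← Real.exp_add, ← Real.exp_add]
    congr 1
    have hid := exp_quad_identity h₁ h₂ μ₁ μ₂ x
    linear_combination (-(1 / 2 : ℝ)) * hid
  calc (Real.sqrt ((2 * π) ^ d * P₁.det))⁻¹ *
        Real.exp (-(1 / 2) * ((x - μ₁) ⬝ᵥ P₁⁻¹ *ᵥ (x - μ₁))) *
        ((Real.sqrt ((2 * π) ^ d * P₂.det))⁻¹ *
        Real.exp (-(1 / 2) * ((x - μ₂) ⬝ᵥ P₂⁻¹ *ᵥ (x - μ₂))))
      = ((Real.sqrt ((2 * π) ^ d * P₁.det))⁻¹ * (Real.sqrt ((2 * π) ^ d * P₂.det))⁻¹) *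
        (Real.exp (-(1 / 2) * ((x - μ₁) ⬝ᵥ P₁⁻¹ *ᵥ (x - μ₁))) *
         Real.exp (-(1 / 2) * ((x - μ₂) ⬝ᵥ P₂⁻¹ *ᵥ (x - μ₂)))) := by ring
    _ = _ := by rw [hconst, hexp]; ring

end gpm

section prodint
variable {P₁ P₂ : Matrix (Fin d) (Fin d) ℝ} (h₁ : P₁.PosDef) (h₂ : P₂.PosDef)
  (μ₁ μ₂ : Fin d → ℝ)
include h₁ h₂

lemma integrable_gaussPDF_mul :
    Integrable (fun x : Fin d → ℝ => gaussPDF d μ₁ P₁ x * gaussPDF d μ₂ P₂ x) := by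
  have hCpd : ((P₁⁻¹ + P₂⁻¹)⁻¹).PosDef := (h₁.inv.add h₂.inv).inv
  simp_rw [gaussPDF_mul h₁ h₂]
  exact (integrable_gaussPDF hCpd _).const_mul _

lemma integral_gaussPDF_mul :
    ∫ x : Fin d → ℝ, gaussPDF d μ₁ P₁ x * gaussPDF d μ₂ P₂ x
      = gaussPDF d μ₂ (P₁ + P₂) μ₁ := by
  have hCpd : ((P₁⁻¹ + P₂⁻¹)⁻¹).PosDef := (h₁.inv.add h₂.inv).inv
  simp_rw [gaussPDF_mul h₁ h₂]
  rw [MeasureTheory.integral_const_mul, integral_gaussPDF hCpd, mul_one]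

end prodint

lemma integrable_comb {ι₁ ι₂ : Type*} [Fintype ι₁] [Fintype ι₂]
    (c₁ : ι₁ → ℝ) (c₂ : ι₂ → ℝ) (m₁ : ι₁ → Fin d → ℝ) (m₂ : ι₂ → Fin d → ℝ)
    (S₁ : ι₁ → Matrix (Fin d) (Fin d) ℝ) (S₂ : ι₂ → Matrix (Fin d) (Fin d) ℝ)
    (h₁ : ∀ i, (S₁ i).PosDef) (h₂ : ∀ j, (S₂ j).PosDef)
    (s₁ : Finset ι₁) (s₂ : Finset ι₂) :
    Integrable (fun x : Fin d → ℝ =>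
      (∑ i ∈ s₁, c₁ i * gaussPDF d (m₁ i) (S₁ i) x) *
      (∑ j ∈ s₂, c₂ j * gaussPDF d (m₂ j) (S₂ j) x)) := by
  simp_rw [Finset.sum_mul_sum]
  apply integrable_finset_sum
  intro i _
  apply integrable_finset_sum
  intro j _
  have heq : (fun x : Fin d → ℝ =>
      c₁ i * gaussPDF d (m₁ i) (S₁ i) x * (c₂ j * gaussPDF d (m₂ j) (S₂ j) x))
      = fun x => (c₁ i * c₂ j) * (gaussPDF d (m₁ i) (S₁ i) x * gaussPDF d (m₂ j) (S₂ j) x) :=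
    funext fun x => by ring
  rw [heq]
  exact (integrable_gaussPDF_mul (h₁ i) (h₂ j) _ _).const_mul _

end Aux

/-- Regarding `J(αₙ) = ISD(p‖q)` as a function of the single mixture weight `αₙ`
(all other weights fixed), `J` is differentiable everywhere with derivative
`J'(αₙ) = 2 Σ_{n'≠n} α_{n'} N(μₙ; μ_{n'}, Pₙ+P_{n'}) + 2 αₙ N(μₙ; μₙ, 2Pₙ)
 - 2 Σₘ βₘ N(μₙ; mₘ, Pₙ+Sₘ)`. -/
theorem hasDerivAt_isd_single_weight (d : ℕ) (I₁ I₂ : Type*)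
    [Fintype I₁] [Fintype I₂] [DecidableEq I₁]
    (α : I₁ → ℝ) (β : I₂ → ℝ)
    (μ : I₁ → Fin d → ℝ) (m : I₂ → Fin d → ℝ)
    (P : I₁ → Matrix (Fin d) (Fin d) ℝ) (S : I₂ → Matrix (Fin d) (Fin d) ℝ)
    (hP : ∀ n, (P n).PosDef) (hS : ∀ m', (S m').PosDef)
    (n : I₁) (a : ℝ) :
    HasDerivAt
      (fun t : ℝ =>
        ∫ x : Fin d → ℝ,
          ((∑ n', Function.update α n t n' * gaussPDF d (μ n') (P n') x)
            - ∑ m', β m' * gaussPDF d (m m') (S m') x) ^ 2)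
      (2 * (∑ n' ∈ Finset.univ.erase n, α n' * gaussPDF d (μ n') (P n + P n') (μ n))
        + 2 * a * gaussPDF d (μ n) ((2 : ℝ) • P n) (μ n)
        - 2 * ∑ m', β m' * gaussPDF d (m m') (P n + S m') (μ n)) a := by
  classical
  set f : (Fin d → ℝ) → ℝ := gaussPDF d (μ n) (P n) with hfdef
  set g : (Fin d → ℝ) → ℝ := fun x =>
    (∑ n' ∈ Finset.univ.erase n, α n' * gaussPDF d (μ n') (P n') x)
      - ∑ m', β m' * gaussPDF d (m m') (S m') x with hgdef
  have hff : Integrable (fun x : Fin d → ℝ => f x * f x) :=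
    integrable_gaussPDF_mul (hP n) (hP n) _ _
  have hff_val : ∫ x : Fin d → ℝ, f x * f x = gaussPDF d (μ n) (P n + P n) (μ n) :=
    integral_gaussPDF_mul (hP n) (hP n) _ _
  have heqfg : (fun x : Fin d → ℝ => f x * g x) = fun x =>
      (∑ n' ∈ Finset.univ.erase n, α n' * (f x * gaussPDF d (μ n') (P n') x))
      - ∑ m', β m' * (f x * gaussPDF d (m m') (S m') x) := by
    funext x
    rw [hgdef]
    simp only [mul_sub, Finset.mul_sum]
    congr 1
    · exact Finset.sum_congr rfl fun i _ => by ring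
    · exact Finset.sum_congr rfl fun j _ => by ring
  have hint1 : ∀ i : I₁, Integrable (fun x : Fin d → ℝ =>
      α i * (f x * gaussPDF d (μ i) (P i) x)) :=
    fun i => (integrable_gaussPDF_mul (hP n) (hP i) _ _).const_mul _
  have hint2 : ∀ j : I₂, Integrable (fun x : Fin d → ℝ =>
      β j * (f x * gaussPDF d (m j) (S j) x)) :=
    fun j => (integrable_gaussPDF_mul (hP n) (hS j) _ _).const_mul _
  have hfg : Integrable (fun x : Fin d → ℝ => f x * g x) := by
    rw [heqfg]
    exact Integrable.sub
      (integrable_finset_sum _ fun i _ => hint1 i)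
      (integrable_finset_sum _ fun j _ => hint2 j)
  have hfg_val : ∫ x : Fin d → ℝ, f x * g x
      = (∑ n' ∈ Finset.univ.erase n, α n' * gaussPDF d (μ n') (P n + P n') (μ n))
        - ∑ m', β m' * gaussPDF d (m m') (P n + S m') (μ n) := by
    rw [heqfg, integral_sub (integrable_finset_sum _ fun i _ => hint1 i)
      (integrable_finset_sum _ fun j _ => hint2 j),
      integral_finset_sum _ fun i _ => hint1 i, integral_finset_sum _ fun j _ => hint2 j]
    congr 1
    · exact Finset.sum_congr rfl fun i _ => by
        rw [MeasureTheory.integral_const_mul, integral_gaussPDF_mul (hP n) (hP i)]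
    · exact Finset.sum_congr rfl fun j _ => by
        rw [MeasureTheory.integral_const_mul, integral_gaussPDF_mul (hP n) (hS j)]
  have hgg : Integrable (fun x : Fin d → ℝ => g x * g x) := by
    have h11 := integrable_comb (fun i => α i) (fun i => α i) μ μ P P hP hP
      (Finset.univ.erase n) (Finset.univ.erase n)
    have h12 := integrable_comb (fun i => α i) (fun j => β j) μ m P S hP hS
      (Finset.univ.erase n) Finset.univ
    have h21 := integrable_comb (fun j => β j) (fun i => α i) m μ S P hS hP
      Finset.univ (Finset.univ.erase n)
    have h22 := integrable_comb (fun j => β j) (fun j => β j) m m S S hS hS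
      Finset.univ Finset.univ
    have heq : (fun x : Fin d → ℝ => g x * g x) = fun x =>
        ((∑ i ∈ Finset.univ.erase n, α i * gaussPDF d (μ i) (P i) x) *
         (∑ i ∈ Finset.univ.erase n, α i * gaussPDF d (μ i) (P i) x)
        - (∑ i ∈ Finset.univ.erase n, α i * gaussPDF d (μ i) (P i) x) *
          (∑ j, β j * gaussPDF d (m j) (S j) x))
        - ((∑ j, β j * gaussPDF d (m j) (S j) x) *
           (∑ i ∈ Finset.univ.erase n, α i * gaussPDF d (μ i) (P i) x)
          - (∑ j, β j * gaussPDF d (m j) (S j) x) *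
            (∑ j, β j * gaussPDF d (m j) (S j) x)) := by
      funext x
      rw [hgdef]
      ring
    rw [heq]
    exact (h11.sub h12).sub (h21.sub h22)
  have hfun : (fun t : ℝ =>
        ∫ x : Fin d → ℝ,
          ((∑ n', Function.update α n t n' * gaussPDF d (μ n') (P n') x)
            - ∑ m', β m' * gaussPDF d (m m') (S m') x) ^ 2)
      = fun t : ℝ => (∫ x : Fin d → ℝ, f x * f x) * t ^ 2
          + (2 * ∫ x : Fin d → ℝ, f x * g x) * t + ∫ x : Fin d → ℝ, g x * g x := by
    funext t
    have hpt : ∀ x : Fin d → ℝ,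
        ((∑ n', Function.update α n t n' * gaussPDF d (μ n') (P n') x)
          - ∑ m', β m' * gaussPDF d (m m') (S m') x) ^ 2
        = t ^ 2 * (f x * f x) + t * (2 * (f x * g x)) + g x * g x := by
      intro x
      have hsum : (∑ n', Function.update α n t n' * gaussPDF d (μ n') (P n') x)
          = t * f x + ∑ n' ∈ Finset.univ.erase n, α n' * gaussPDF d (μ n') (P n') x := by
        rw [← Finset.add_sum_erase _ _ (Finset.mem_univ n), Function.update_self]
        congr 1
        exact Finset.sum_congr rfl fun i hi => by
          rw [Function.update_of_ne (Finset.ne_of_mem_erase hi)]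
      rw [hsum, hgdef]
      ring
    simp_rw [hpt]
    have hA : Integrable (fun x : Fin d → ℝ =>
        t ^ 2 * (f x * f x) + t * (2 * (f x * g x))) :=
      (hff.const_mul _).add ((hfg.const_mul 2).const_mul t)
    have hB : Integrable (fun x : Fin d → ℝ => t ^ 2 * (f x * f x)) := hff.const_mul _
    have hC : Integrable (fun x : Fin d → ℝ => t * (2 * (f x * g x))) :=
      (hfg.const_mul 2).const_mul t
    rw [integral_add hA hgg, integral_add hB hC,
      MeasureTheory.integral_const_mul, MeasureTheory.integral_const_mul,
      MeasureTheory.integral_const_mul]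
    ring
  rw [hfun]
  have hder : HasDerivAt
      (fun t : ℝ => (∫ x : Fin d → ℝ, f x * f x) * t ^ 2
        + (2 * ∫ x : Fin d → ℝ, f x * g x) * t + ∫ x : Fin d → ℝ, g x * g x)
      ((∫ x : Fin d → ℝ, f x * f x) * (2 * a) + (2 * ∫ x : Fin d → ℝ, f x * g x)) a := by
    have h1 : HasDerivAt (fun t : ℝ => t ^ 2) (2 * a) a := by
      simpa using hasDerivAt_pow 2 a
    have h2 := (h1.const_mul (∫ x : Fin d → ℝ, f x * f x)).add
      ((hasDerivAt_id a).const_mul (2 * ∫ x : Fin d → ℝ, f x * g x))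
    simpa using h2.add_const (∫ x : Fin d → ℝ, g x * g x)
  convert hder using 1
  rw [hfg_val, hff_val, show (2 : ℝ) • P n = P n + P n from two_smul ℝ (P n)]
  ring
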